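/- Let F have characteristic ≠ 2, K, L finite field extensions of F, σ ∈ Aut_F(K) and φ ∈ Aut_F(L) nontrivial, c ∈ K^×, d ∈ L^×. A map G : D(K,σ,c) → D(L,φ,d) is an F-algebra isomorphism if and only if G(x,y) = (τ(x), τ(y)b) for some F-isomorphism τ : K → L satisfying φ∘τ = τ∘σ and some b ∈ L^× with τ(c) = d·φ(b²). -/

import Mathlib

def dicksonMul {B : Type*} [Ring B] (σ : B → B) (c : B) (p q : B × B) : B × B :=
  (p.1 * q.1 + c * σ (p.2 * q.2), p.1 * q.2 + p.2 * q.1)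

def IsDicksonIso (F : Type*) {K L : Type*} [Field F] [Field K] [Field L]
    [Algebra F K] [Algebra F L] (σ : K → K) (c : K) (φ : L → L) (d : L)
    (G : K × K → L × L) : Prop :=
  Function.Bijective G ∧ (∀ p q : K × K, G (p + q) = G p + G q) ∧
    (∀ (a : F) (p : K × K), G (a • p) = a • G p) ∧
    (∀ p q : K × K, G (dicksonMul σ c p q) = dicksonMul φ d (G p) (G q))

section aux
variable {F M : Type*} [Field F] [Field M] [Algebra F M]

lemma dickson_mid (ψ : M ≃ₐ[F] M) (d : M) (x : M) (p q : M × M) :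
    dicksonMul ψ d (dicksonMul ψ d p (x, 0)) q
      = dicksonMul ψ d p (dicksonMul ψ d (x, 0) q) := by
  simp only [dicksonMul, mul_zero, zero_mul, map_zero, add_zero, zero_add]
  refine Prod.ext ?_ (by ring)
  rw [mul_assoc p.2 x q.2]; ring

lemma dickson_mid_snd (ψ : M ≃ₐ[F] M) (d : M) (hd : d ≠ 0) {l : M} (hl : ψ l ≠ l)
    (A : M × M)
    (h : ∀ p q : M × M, dicksonMul ψ d (dicksonMul ψ d p A) q
      = dicksonMul ψ d p (dicksonMul ψ d A q)) : A.2 = 0 := by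
  have h1 := congrArg Prod.fst (h (l, 0) (0, 1))
  simp only [dicksonMul, mul_zero, zero_mul, map_zero, add_zero, zero_add, mul_one,
    one_mul, map_mul] at h1
  have h2 : (ψ l - l) * (d * ψ A.2) = 0 := by linear_combination h1
  rcases mul_eq_zero.1 h2 with h3 | h3
  · exact absurd (sub_eq_zero.1 h3) hl
  rcases mul_eq_zero.1 h3 with h4 | h4
  · exact absurd h4 hd
  · exact ψ.injective (by simpa using h4)

end aux

theorem stmt6 (F K L : Type*) [Field F] [Field K] [Field L] [Algebra F K] [Algebra F L]
    [FiniteDimensional F K] [FiniteDimensional F L] (hF : ringChar F ≠ 2)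
    (σ : K ≃ₐ[F] K) (hσ : σ ≠ AlgEquiv.refl) (φ : L ≃ₐ[F] L) (hφ : φ ≠ AlgEquiv.refl)
    (c : K) (hc : c ≠ 0) (d : L) (hd : d ≠ 0) (G : K × K → L × L) :
    IsDicksonIso F σ c φ d G ↔
      ∃ (τ : K ≃ₐ[F] L) (b : L), b ≠ 0 ∧ (∀ x : K, φ (τ x) = τ (σ x)) ∧
        τ c = d * φ (b ^ 2) ∧ ∀ p : K × K, G p = (τ p.1, τ p.2 * b) := by
  constructor
  · rintro ⟨hbij, hadd, hsmul, hmul⟩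
    obtain ⟨l, hl⟩ : ∃ l : L, φ l ≠ l := by
      by_contra h
      push_neg at h
      exact hφ (AlgEquiv.ext h)
    have two_ne : (2 : L) ≠ 0 := by
      have h2F : (2 : F) ≠ 0 := Ring.two_ne_zero hF
      have : (2 : L) = algebraMap F L 2 := by rw [map_ofNat]
      rw [this]
      exact fun h => h2F ((algebraMap F L).injective (by simpa using h))
    -- G 0 = 0
    have hG0 : G 0 = 0 := by
      have h := hadd 0 0
      rw [add_zero] at h
      have h2 : G 0 + 0 = G 0 + G 0 := by rw [add_zero]; exact h
      exact (add_left_cancel h2).symm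
    -- second coordinate of G (x,0) vanishes
    have hmid : ∀ x : K, (G (x, 0)).2 = 0 := by
      intro x
      refine dickson_mid_snd φ d hd hl _ (fun p q => ?_)
      obtain ⟨p', hp⟩ := hbij.2 p
      obtain ⟨q', hq⟩ := hbij.2 q
      rw [← hp, ← hq, ← hmul, ← hmul, ← hmul, ← hmul]
      exact congrArg G (dickson_mid σ c x p' q')
    set t : K → L := fun x => (G (x, 0)).1 with ht
    have hGx : ∀ x : K, G (x, 0) = (t x, 0) := fun x => Prod.ext rfl (hmid x)
    -- t is additive
    have t_add : ∀ x y : K, t (x + y) = t x + t y := by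
      intro x y
      have := hadd (x, 0) (y, 0)
      rw [show ((x:K), (0:K)) + (y, 0) = (x + y, 0) by simp] at this
      have := congrArg Prod.fst this
      simpa using this
    have t_zero : t 0 = 0 := by
      have := congrArg Prod.fst hG0
      exact this
    -- t is multiplicative
    have t_mul : ∀ x y : K, t (x * y) = t x * t y := by
      intro x y
      have hm := hmul (x, 0) (y, 0)
      rw [show dicksonMul (⇑σ) c (x, 0) (y, 0) = (x * y, 0) by
        simp [dicksonMul]] at hm
      rw [hGx, hGx, hGx] at hm
      have := congrArg Prod.fst hm
      simpa [dicksonMul] using this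
    -- G (1,0) = (1,0)
    have hG1 : G (1, 0) = (1, 0) := by
      obtain ⟨p, hp⟩ := hbij.2 ((1 : L), (0 : L))
      have hm := hmul (1, 0) p
      rw [show dicksonMul (⇑σ) c (1, 0) p = p by simp [dicksonMul], hp] at hm
      rw [hGx 1] at hm ⊢
      have := congrArg Prod.fst hm
      simp [dicksonMul] at this
      rw [this]
    have t_one : t 1 = 1 := by
      have := congrArg Prod.fst hG1
      simpa using this
    -- commutes with algebraMap
    have t_comm : ∀ a : F, t (algebraMap F K a) = algebraMap F L a := by
      intro a
      have hs := hsmul a (1, 0)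
      rw [hG1] at hs
      rw [show ((a • ((1:K),(0:K)) : K × K)) = (algebraMap F K a, 0) by
        simp [Prod.smul_def, Algebra.smul_def]] at hs
      have := congrArg Prod.fst hs
      simpa [Prod.smul_def, Algebra.smul_def] using this
    -- t injective
    have t_inj : Function.Injective t := by
      intro x y hxy
      have : G (x, 0) = G (y, 0) := by rw [hGx, hGx, hxy]
      exact congrArg Prod.fst (hbij.1 this)
    -- t surjective
    have t_surj : Function.Surjective t := by
      intro u
      obtain ⟨p, hp⟩ := hbij.2 (u, 0)
      obtain ⟨k, hk⟩ : ∃ k : K, σ k ≠ k := by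
        by_contra h
        push_neg at h
        exact hσ (AlgEquiv.ext h)
      have hp2 : p.2 = 0 := by
        refine dickson_mid_snd σ c hc hk _ (fun b q => ?_)
        apply hbij.1
        rw [hmul, hmul, hmul, hmul, hp]
        exact dickson_mid φ d u (G b) (G q)
      refine ⟨p.1, ?_⟩
      have : G (p.1, 0) = (u, 0) := by rw [show ((p.1, (0:K)) : K × K) = p from (Prod.ext rfl hp2.symm), hp]
      exact congrArg Prod.fst this
    -- package τ
    let τ : K ≃ₐ[F] L := AlgEquiv.ofBijective
      { toFun := t, map_one' := t_one, map_mul' := t_mul, map_zero' := t_zero,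
        map_add' := t_add, commutes' := t_comm } ⟨t_inj, t_surj⟩
    have hτ : ∀ x, τ x = t x := fun _ => rfl
    set s : L := (G (0, 1)).1 with hs
    set b : L := (G (0, 1)).2 with hb
    have hG01 : G (0, 1) = (s, b) := rfl
    -- G (0, x) = (t x * s, t x * b)
    have h1 : ∀ x : K, G (0, x) = (t x * s, t x * b) := by
      intro x
      have hm := hmul (x, 0) (0, 1)
      rw [show dicksonMul (⇑σ) c (x, 0) (0, 1) = (0, x) by simp [dicksonMul], hGx] at hm
      rw [hm, hG01]
      simp [dicksonMul]
    -- key relation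
    have h2 : ∀ x : K, (t (c * σ x), (0:L)) =
        (s * (t x * s) + d * φ (b * (t x * b)), s * (t x * b) + b * (t x * s)) := by
      intro x
      have hm := hmul (0, 1) (0, x)
      rw [show dicksonMul (⇑σ) c (0, 1) (0, x) = (c * σ x, 0) by simp [dicksonMul],
        hGx, hG01, h1 x] at hm
      rw [hm]
      simp [dicksonMul]
    have hsb : s * b = 0 := by
      have := congrArg Prod.snd (h2 1)
      simp only [t_one, one_mul] at this
      have h2sb : (2:L) * (s * b) = 0 := by linear_combination -this
      rcases mul_eq_zero.1 h2sb with h | h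
      · exact absurd h two_ne
      · exact h
    have hb0 : b ≠ 0 := by
      intro hb0
      obtain ⟨x0, hx0⟩ := t_surj s
      have : G (x0, 0) = G (0, 1) := by
        rw [hGx, hG01, hx0, hb0]
      have := hbij.1 this
      simpa using congrArg Prod.snd this
    have hs0 : s = 0 := by
      rcases mul_eq_zero.1 hsb with h | h
      · exact h
      · exact absurd h hb0
    have hτc : t c = d * φ (b ^ 2) := by
      have h := congrArg Prod.fst (h2 1)
      simp only [map_one, mul_one, t_one, one_mul, hs0, zero_mul, mul_zero, zero_add] at h
      rw [sq]
      exact h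
    have hcomm : ∀ x : K, φ (t x) = t (σ x) := by
      intro x
      have hx := congrArg Prod.fst (h2 x)
      simp only [hs0, zero_mul, mul_zero, zero_add, map_mul] at hx
      have hlhs : t (c * σ x) = t c * t (σ x) := t_mul c (σ x)
      rw [hlhs, hτc] at hx
      have hbne : φ b ≠ 0 := fun h => hb0 (by simpa using φ.injective (by simpa using h))
      have hdb : d * φ (b ^ 2) ≠ 0 := by
        rw [map_pow]
        exact mul_ne_zero hd (pow_ne_zero 2 hbne)
      have : d * φ (b^2) * t (σ x) = d * φ (b^2) * φ (t x) := by
        rw [map_pow] at hx ⊢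
        linear_combination hx
      exact (mul_left_cancel₀ hdb this).symm
    refine ⟨τ, b, hb0, fun x => by rw [hτ, hτ, hcomm], by rw [hτ, hτc], fun p => ?_⟩
    have : G p = G (p.1, 0) + G (0, p.2) := by
      rw [← hadd]
      congr 1
      simp
    rw [this, hGx, h1, hs0]
    simp [hτ]
  · rintro ⟨τ, b, hb, hcomm, hτc, hG⟩
    refine ⟨?_, ?_, ?_, ?_⟩
    · have hb' : τ.symm b ≠ 0 := fun h => hb (by rw [← τ.apply_symm_apply b, h, map_zero])
      refine Function.bijective_iff_has_inverse.2
        ⟨fun q => (τ.symm q.1, τ.symm (q.2 * b⁻¹)), fun p => ?_, fun q => ?_⟩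
      · rw [hG]
        simp [mul_assoc, inv_mul_cancel₀ hb, mul_inv_cancel₀ hb', inv_mul_cancel₀ hb',
          mul_inv_cancel₀ hb]
      · rw [hG]
        simp [mul_assoc, inv_mul_cancel₀ hb, mul_inv_cancel₀ hb', inv_mul_cancel₀ hb',
          mul_inv_cancel₀ hb]
    · intro p q
      rw [hG, hG, hG]
      simp [Prod.ext_iff, map_add, add_mul]
    · intro a p
      rw [hG, hG]
      simp [Prod.ext_iff, Prod.smul_def, map_smul, smul_mul_assoc]
    · intro p q
      rw [hG, hG, hG]
      simp only [dicksonMul, Prod.ext_iff, map_add, map_mul]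
      constructor
      · rw [← hcomm p.2, ← hcomm q.2, hτc, map_pow]
        ring
      · ring
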